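/- If a mechanism φ is multi-separation strategyproof, then it is strategyproof: for all weak orders R, R', φ(R) first order-stochastically dominates φ(R') at R. -/

import Mathlib

open Finset

/-- An ordered partition `M_1 P ... P M_K` of a finite set `α` is encoded by a rank
function `R : α → ℕ`: alternative `a` lies in class `M_{R a}` (0-indexed), and lower
rank means more preferred.  `j` is weakly preferred to `a` iff `R j ≤ R a`. -/
def classOf {α : Type} [Fintype α] (R : α → ℕ) (k : ℕ) : Finset α :=
  Finset.univ.filter fun a => R a = k

/-- `probOf x A = x_A = ∑_{a ∈ A} x_a`. -/
def probOf {α : Type} [Fintype α] (x : α → ℝ) (A : Finset α) : ℝ := ∑ a ∈ A, x a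

/-- `x` is a lottery (probability distribution) on `α`. -/
def IsLottery {α : Type} [Fintype α] (x : α → ℝ) : Prop :=
  (∀ a, 0 ≤ x a) ∧ ∑ a, x a = 1

/-- `x` first order-stochastically dominates `y` at `R`. -/
def SD {α : Type} [Fintype α] (R : α → ℕ) (x y : α → ℝ) : Prop :=
  ∀ a : α, ∑ j ∈ Finset.univ.filter (fun j => R j ≤ R a), x j ≥
           ∑ j ∈ Finset.univ.filter (fun j => R j ≤ R a), y j

/-- A rank function is canonical if its range is an initial segment of ℕ,
i.e. all indifference classes `M_1, …, M_K` are nonempty. -/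
def Canonical {α : Type} (R : α → ℕ) : Prop :=
  ∀ a : α, ∀ k, k ≤ R a → ∃ b, R b = k

/-- Strategyproofness: for all preference orders `R, R'`, `φ(R)` first
order-stochastically dominates `φ(R')` at `R`. -/
def Strategyproof {α : Type} [Fintype α] (φ : (α → ℕ) → α → ℝ) : Prop :=
  ∀ R R' : α → ℕ, Canonical R → Canonical R' → SD R (φ R) (φ R')

/-- `(R, R')` is a separation with split at index `κ`: `R'` splits the indifference
class `M_κ` of `R` into two nonempty parts `M_κ^1 = classOf R' κ` (preferred) and
`M_κ^2 = classOf R' (κ+1)`, all other classes unchanged (classes below `κ` keep their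
rank, classes above `κ` are shifted by one). -/
def IsSeparation {α : Type} [Fintype α] (R R' : α → ℕ) (κ : ℕ) : Prop :=
  Canonical R ∧
  (∀ a, R a < κ → R' a = R a) ∧
  (∀ a, R a = κ → R' a = κ ∨ R' a = κ + 1) ∧
  (∀ a, κ < R a → R' a = R a + 1) ∧
  (∃ a, R a = κ ∧ R' a = κ) ∧
  (∃ a, R a = κ ∧ R' a = κ + 1)

/-- Separation upper invariance: the probability of every class ranked above the
split class is unchanged. -/
def SepUpperInvariant {α : Type} [Fintype α] (φ : (α → ℕ) → α → ℝ) : Prop :=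
  ∀ R R' κ, IsSeparation R R' κ →
    ∀ k < κ, probOf (φ R) (classOf R k) = probOf (φ R') (classOf R k)

/-- Separation lower invariance: the probability of every class ranked below the
split class is unchanged. -/
def SepLowerInvariant {α : Type} [Fintype α] (φ : (α → ℕ) → α → ℝ) : Prop :=
  ∀ R R' κ, IsSeparation R R' κ →
    ∀ k, κ < k → probOf (φ R) (classOf R k) = probOf (φ R') (classOf R k)

/-- Separation responsiveness: `φ_{M_κ^1}(R') ≥ φ_{M_κ^1}(R)` and
`φ_{M_κ^2}(R') ≤ φ_{M_κ^2}(R)`. -/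
def SepResponsive {α : Type} [Fintype α] (φ : (α → ℕ) → α → ℝ) : Prop :=
  ∀ R R' κ, IsSeparation R R' κ →
    probOf (φ R') (classOf R' κ) ≥ probOf (φ R) (classOf R' κ) ∧
    probOf (φ R') (classOf R' (κ + 1)) ≤ probOf (φ R) (classOf R' (κ + 1))

/-- Separation directness: if the probability of some class changes under a
separation, then both the probabilities of `M_κ^1` and of `M_κ^2` change. -/
def SepDirect {α : Type} [Fintype α] (φ : (α → ℕ) → α → ℝ) : Prop :=
  ∀ R R' κ, IsSeparation R R' κ →
    (∃ k, probOf (φ R) (classOf R k) ≠ probOf (φ R') (classOf R k)) →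
    probOf (φ R') (classOf R' κ) ≠ probOf (φ R) (classOf R' κ) ∧
    probOf (φ R') (classOf R' (κ + 1)) ≠ probOf (φ R) (classOf R' (κ + 1))


/-- `(R,R')` is a multi-separation: `R'` refines `R`, i.e. `R'` is obtained from `R`
by partitioning each indifference class `M_k` of `R` into `L_k ≥ 1` strictly ranked
subclasses, preserving the between-class rankings of `R`. -/
def IsMultiSeparation {α : Type} [Fintype α] (R R' : α → ℕ) : Prop :=
  Canonical R ∧ Canonical R' ∧ ∀ a b, R a < R b → R' a < R' b

set_option linter.unusedSectionVars false

section MultiSepAux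
variable {α : Type} [Fintype α]

noncomputable def rnk (u : α → ℝ) (a : α) : ℕ :=
  ((univ.image u).filter (fun x => u a < x)).card

lemma rnk_le_of_le {u : α → ℝ} {a b : α} (h : u a ≤ u b) : rnk u b ≤ rnk u a := by
  apply Finset.card_le_card
  intro x hx
  rw [Finset.mem_filter] at hx ⊢
  exact ⟨hx.1, lt_of_le_of_lt h hx.2⟩

lemma rnk_lt_iff (u : α → ℝ) (a b : α) : rnk u a < rnk u b ↔ u b < u a := by
  constructor
  · intro h
    by_contra hle
    push_neg at hle
    exact absurd (rnk_le_of_le hle) (not_le.mpr h)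
  · intro h
    apply Finset.card_lt_card
    rw [Finset.ssubset_iff_of_subset]
    · refine ⟨u a, ?_, ?_⟩
      · rw [Finset.mem_filter]
        exact ⟨Finset.mem_image_of_mem u (mem_univ a), h⟩
      · rw [Finset.mem_filter]
        simp
    · intro x hx
      rw [Finset.mem_filter] at hx ⊢
      exact ⟨hx.1, lt_trans h hx.2⟩

lemma rnk_cons {u : α → ℝ} {a b : α} (h : rnk u a ≤ rnk u b) : u b ≤ u a :=
  le_of_not_gt (fun hlt => absurd ((rnk_lt_iff u b a).mpr hlt) (not_lt.mpr h))

lemma canonical_rnk (u : α → ℝ) : Canonical (rnk u) := by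
  intro a k hk
  classical
  set A : Finset α := univ.filter (fun b => k ≤ rnk u b) with hA
  have hane : A.Nonempty := ⟨a, by simp [hA, hk]⟩
  obtain ⟨b₀, hb₀A, hmax⟩ := Finset.exists_max_image A u hane
  have hb₀ : k ≤ rnk u b₀ := (Finset.mem_filter.mp hb₀A).2
  refine ⟨b₀, ?_⟩
  by_contra hne
  have hklt : k < rnk u b₀ := lt_of_le_of_ne hb₀ (Ne.symm hne)
  set S := (univ.image u).filter (fun x => u b₀ < x) with hS
  have hSne : S.Nonempty := Finset.card_pos.mp (lt_of_le_of_lt (Nat.zero_le k) hklt)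
  set m := S.min' hSne with hm
  have hmS : m ∈ S := Finset.min'_mem S hSne
  rw [Finset.mem_filter] at hmS
  obtain ⟨c, _, hc⟩ := Finset.mem_image.mp hmS.1
  have hfc : (univ.image u).filter (fun x => u c < x) = S.erase m := by
    ext x
    rw [Finset.mem_erase, hS, Finset.mem_filter, Finset.mem_filter]
    constructor
    · rintro ⟨hx1, hx2⟩
      rw [hc] at hx2
      exact ⟨ne_of_gt hx2, hx1, lt_trans hmS.2 hx2⟩
    · rintro ⟨hne', hx1, hx2⟩
      refine ⟨hx1, ?_⟩
      rw [hc]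
      exact lt_of_le_of_ne (Finset.min'_le S x (by rw [hS, Finset.mem_filter]; exact ⟨hx1, hx2⟩)) (Ne.symm hne')
  have hrc : rnk u c = S.card - 1 := by
    rw [rnk, hfc, Finset.card_erase_of_mem (Finset.min'_mem S hSne)]
  have hkc : k ≤ rnk u c := by
    have : k + 1 ≤ S.card := hklt
    omega
  have hcA : c ∈ A := by simp [hA, hkc]
  have : u c ≤ u b₀ := hmax c hcA
  rw [hc] at this
  exact absurd hmS.2 (not_lt.mpr this)
lemma rank_mono_le {R R₂ : α → ℕ} (hR : Canonical R)
    (h : ∀ a b, R a < R b → R₂ a < R₂ b) : ∀ a, R a ≤ R₂ a := by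
  suffices H : ∀ n a, R a = n → n ≤ R₂ a by
    exact fun a => H (R a) a rfl
  intro n
  induction n with
  | zero => exact fun a _ => Nat.zero_le _
  | succ n ih =>
    intro a ha
    obtain ⟨b, hb⟩ := hR a n (by omega)
    have h1 : R₂ b < R₂ a := h b a (by omega)
    have h2 : n ≤ R₂ b := ih b hb
    omega

lemma canonical_ext {R R₂ : α → ℕ} (hR : Canonical R) (hR₂ : Canonical R₂)
    (h : ∀ a b, R a < R b ↔ R₂ a < R₂ b) : R = R₂ :=
  funext fun a => le_antisymm (rank_mono_le hR (fun a b => (h a b).1) a)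
    (rank_mono_le hR₂ (fun a b => (h a b).2) a)

lemma L1 : ∀ (K : ℕ) (s : Finset α) (R : α → ℕ) (u d : α → ℝ),
    (∀ a ∈ s, R a ≤ K) →
    (∀ a ∈ s, ∀ b ∈ s, R a ≤ R b → u b ≤ u a) →
    (∀ a ∈ s, 0 ≤ u a) →
    (∀ a ∈ s, 0 ≤ ∑ j ∈ s.filter (fun j => R j ≤ R a), d j) →
    0 ≤ ∑ j ∈ s, u j * d j := by
  intro K
  induction K with
  | zero =>
    intro s R u d hK hu hpos hd
    rcases s.eq_empty_or_nonempty with rfl | ⟨a₀, ha₀⟩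
    · simp
    · have hval : ∀ j ∈ s, u j = u a₀ := by
        intro j hj
        have h1 : R j ≤ R a₀ := by
          have := hK j hj; have := hK a₀ ha₀; omega
        have h2 : R a₀ ≤ R j := by
          have := hK j hj; have := hK a₀ ha₀; omega
        exact le_antisymm (hu a₀ ha₀ j hj h2) (hu j hj a₀ ha₀ h1)
      have : ∑ j ∈ s, u j * d j = u a₀ * ∑ j ∈ s, d j := by
        rw [Finset.mul_sum]
        exact Finset.sum_congr rfl (fun j hj => by rw [hval j hj])
      rw [this]
      apply mul_nonneg (hpos a₀ ha₀)
      have hfs : s.filter (fun j => R j ≤ R a₀) = s := by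
        apply Finset.filter_true_of_mem
        intro j hj
        have := hK j hj; have := hK a₀ ha₀; omega
      have := hd a₀ ha₀
      rwa [hfs] at this
  | succ K ih =>
    intro s R u d hK hu hpos hd
    by_cases htop : (s.filter (fun a => R a = K + 1)).Nonempty
    · obtain ⟨b₀, hb₀f⟩ := htop
      rw [Finset.mem_filter] at hb₀f
      obtain ⟨hb₀s, hb₀K⟩ := hb₀f
      set c := u b₀ with hcdef
      have hcmin : ∀ j ∈ s, c ≤ u j := by
        intro j hj
        exact hu j hj b₀ hb₀s (by rw [hb₀K]; exact hK j hj)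
      have key : ∑ j ∈ s, u j * d j
          = (∑ j ∈ s, (u j - c) * d j) + c * ∑ j ∈ s, d j := by
        rw [Finset.mul_sum, ← Finset.sum_add_distrib]
        exact Finset.sum_congr rfl (fun j _ => by ring)
      rw [key]
      have hterm2 : 0 ≤ c * ∑ j ∈ s, d j := by
        apply mul_nonneg (hpos b₀ hb₀s)
        have hfs : s.filter (fun j => R j ≤ R b₀) = s := by
          apply Finset.filter_true_of_mem
          intro j hj
          rw [hb₀K]; exact hK j hj
        have := hd b₀ hb₀s
        rwa [hfs] at this
      have hterm1 : 0 ≤ ∑ j ∈ s, (u j - c) * d j := by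
        set s' := s.filter (fun j => R j ≤ K) with hs'
        have hsum : ∑ j ∈ s', (u j - c) * d j = ∑ j ∈ s, (u j - c) * d j := by
          apply Finset.sum_subset (Finset.filter_subset _ _)
          intro j hj hjns'
          have hjK : R j = K + 1 := by
            have h1 := hK j hj
            rw [Finset.mem_filter] at hjns'
            push_neg at hjns'
            have h2 := hjns' hj
            omega
          have : u j = c := by
            apply le_antisymm _ (hcmin j hj)
            apply hu b₀ hb₀s j hj
            rw [hb₀K, hjK]
          rw [this]; ring
        rw [← hsum]
        apply ih s' R (fun j => u j - c) d
        · intro a ha; rw [hs', Finset.mem_filter] at ha; exact ha.2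
        · intro a ha b hb hab
          have has := Finset.mem_of_mem_filter a ha
          have hbs := Finset.mem_of_mem_filter b hb
          simp only [sub_le_sub_iff_right]
          exact hu a has b hbs hab
        · intro a ha
          simp only [sub_nonneg]
          exact hcmin a (Finset.mem_of_mem_filter a ha)
        · intro a ha
          have has := Finset.mem_of_mem_filter a ha
          have haK : R a ≤ K := by rw [hs', Finset.mem_filter] at ha; exact ha.2
          have hff : s'.filter (fun j => R j ≤ R a) = s.filter (fun j => R j ≤ R a) := by
            rw [hs', Finset.filter_filter]
            apply Finset.filter_congr
            intro j _
            constructor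
            · rintro ⟨_, h2⟩; exact h2
            · intro h2; exact ⟨le_trans h2 haK, h2⟩
          rw [hff]
          exact hd a has
      linarith
    · apply ih s R u d _ hu hpos hd
      intro a ha
      have h1 := hK a ha
      have h2 : ¬ R a = K + 1 := by
        intro he
        exact htop ⟨a, Finset.mem_filter.mpr ⟨ha, he⟩⟩
      omega

lemma inner_of_SD {R : α → ℕ} {x y : α → ℝ} (h : SD R x y)
    (hxy : ∑ a, x a = ∑ a, y a)
    {u : α → ℝ} (hu : ∀ a b, R a ≤ R b → u b ≤ u a) :
    0 ≤ ∑ j, u j * (x j - y j) := by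
  rcases (univ : Finset α).eq_empty_or_nonempty with he | hne
  · rw [show (univ : Finset α) = ∅ from he]
    simp
  obtain ⟨b₀, _, hmax⟩ := Finset.exists_max_image univ R hne
  have htot : ∑ j, (x j - y j) = 0 := by
    rw [Finset.sum_sub_distrib, hxy]; ring
  have key : ∑ j, u j * (x j - y j)
      = (∑ j, (u j - u b₀) * (x j - y j)) + u b₀ * ∑ j, (x j - y j) := by
    rw [Finset.mul_sum, ← Finset.sum_add_distrib]
    exact Finset.sum_congr rfl (fun j _ => by ring)
  rw [key, htot, mul_zero, add_zero]
  apply L1 (R b₀) univ R (fun j => u j - u b₀) (fun j => x j - y j)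
  · intro a _; exact hmax a (mem_univ a)
  · intro a _ b _ hab
    simp only [sub_le_sub_iff_right]
    exact hu a b hab
  · intro a _
    simp only [sub_nonneg]
    exact hu a b₀ (hmax a (mem_univ a))
  · intro a _
    have := h a
    rw [ge_iff_le, ← sub_nonneg, ← Finset.sum_sub_distrib] at this
    exact this
noncomputable def rev (u u' : α → ℝ) : Finset (α × α) :=
  univ.filter (fun p => u p.2 < u p.1 ∧ u' p.1 < u' p.2)

lemma mem_rev {u u' : α → ℝ} {p : α × α} :
    p ∈ rev u u' ↔ u p.2 < u p.1 ∧ u' p.1 < u' p.2 := by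
  simp [rev]

lemma main_ind (φ : (α → ℕ) → α → ℝ) (hlot : ∀ R, IsLottery (φ R))
    (hmsp : ∀ R R', IsMultiSeparation R R' → SD R (φ R) (φ R') ∧ SD R' (φ R') (φ R)) :
    ∀ n (u u' : α → ℝ), (rev u u').card ≤ n →
      0 ≤ ∑ j, u j * (φ (rnk u) j - φ (rnk u') j) := by
  classical
  intro n
  induction n using Nat.strong_induction_on with
  | _ n ih =>
  intro u u' hc
  have hsum : ∀ R R' : α → ℕ, ∑ a, φ R a = ∑ a, φ R' a := fun R R' => by
    rw [(hlot R).2, (hlot R').2]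
  by_cases hrev : rev u u' = ∅
  · -- base case
    set m : α → ℝ := fun a => u a + u' a with hm
    have hnorev : ∀ a b, u b < u a → u' b ≤ u' a := by
      intro a b h1
      by_contra h2
      push_neg at h2
      have hmem : (a, b) ∈ rev u u' := mem_rev.mpr ⟨h1, h2⟩
      rw [hrev] at hmem
      exact absurd hmem (Finset.notMem_empty _)
    have ms1 : IsMultiSeparation (rnk u) (rnk m) := by
      refine ⟨canonical_rnk u, canonical_rnk m, ?_⟩
      intro a b hab
      rw [rnk_lt_iff] at hab ⊢
      have := hnorev a b hab
      simp only [hm]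
      linarith
    have ms2 : IsMultiSeparation (rnk u') (rnk m) := by
      refine ⟨canonical_rnk u', canonical_rnk m, ?_⟩
      intro a b hab
      rw [rnk_lt_iff] at hab ⊢
      have huba : u b ≤ u a := by
        by_contra h2
        push_neg at h2
        have := hnorev b a h2
        linarith
      simp only [hm]
      linarith
    have t1 : 0 ≤ ∑ j, u j * (φ (rnk u) j - φ (rnk m) j) :=
      inner_of_SD (hmsp _ _ ms1).1 (hsum _ _) (fun a b hab => rnk_cons hab)
    have t2 : 0 ≤ ∑ j, u j * (φ (rnk m) j - φ (rnk u') j) := by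
      apply inner_of_SD (hmsp _ _ ms2).2 (hsum _ _)
      intro a b hab
      have hm' : m b ≤ m a := rnk_cons hab
      by_contra h2
      push_neg at h2
      have := hnorev b a h2
      simp only [hm] at hm'
      linarith
    have split : ∑ j, u j * (φ (rnk u) j - φ (rnk u') j)
        = (∑ j, u j * (φ (rnk u) j - φ (rnk m) j))
          + ∑ j, u j * (φ (rnk m) j - φ (rnk u') j) := by
      rw [← Finset.sum_add_distrib]
      exact Finset.sum_congr rfl (fun j _ => by ring)
    rw [split]
    linarith
  · -- step case
    have hne : (rev u u').Nonempty := Finset.nonempty_iff_ne_empty.mpr hrev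
    obtain ⟨p₀, hp₀, hmin⟩ := Finset.exists_min_image (rev u u')
      (fun p => (u p.1 - u p.2) / ((u p.1 - u p.2) + (u' p.2 - u' p.1))) hne
    set τ := (u p₀.1 - u p₀.2) / ((u p₀.1 - u p₀.2) + (u' p₀.2 - u' p₀.1)) with hτ
    have hp₀m := mem_rev.mp hp₀
    have hA₀ : 0 < u p₀.1 - u p₀.2 := by linarith [hp₀m.1]
    have hB₀ : 0 < u' p₀.2 - u' p₀.1 := by linarith [hp₀m.2]
    have hτpos : 0 < τ := div_pos hA₀ (by linarith)
    have hτlt : τ < 1 := by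
      rw [hτ, div_lt_one (by linarith)]
      linarith
    set w : α → ℝ := fun a => (1 - τ) * u a + τ * u' a with hw
    have hwge : ∀ p ∈ rev u u', w p.2 ≤ w p.1 := by
      intro p hp
      have hpm := mem_rev.mp hp
      have hA : 0 < u p.1 - u p.2 := by linarith [hpm.1]
      have hB : 0 < u' p.2 - u' p.1 := by linarith [hpm.2]
      have hle : τ ≤ (u p.1 - u p.2) / ((u p.1 - u p.2) + (u' p.2 - u' p.1)) := hmin p hp
      rw [le_div_iff₀ (by linarith)] at hle
      simp only [hw]
      nlinarith
    have hweq : w p₀.1 = w p₀.2 := by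
      have hAB : (u p₀.1 - u p₀.2) + (u' p₀.2 - u' p₀.1) ≠ 0 := by positivity
      simp only [hw, hτ]
      field_simp
      ring
    have hrevuw : rev u w = ∅ := by
      rw [Finset.eq_empty_iff_forall_notMem]
      intro p hp
      have hpm := mem_rev.mp hp
      by_cases hc' : u' p.1 < u' p.2
      · exact absurd hpm.2 (not_lt.mpr (hwge p (mem_rev.mpr ⟨hpm.1, hc'⟩)))
      · push_neg at hc'
        have hge : w p.2 ≤ w p.1 := by
          simp only [hw]
          nlinarith [hpm.1]
        exact absurd hpm.2 (not_lt.mpr hge)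
    have hsub1 : rev w u' ⊆ (rev u u').erase p₀ := by
      intro p hp
      have hpm := mem_rev.mp hp
      have hu12 : u p.2 < u p.1 := by
        by_contra h2
        push_neg at h2
        have := hpm.1
        simp only [hw] at this
        nlinarith [hpm.2]
      rw [Finset.mem_erase]
      refine ⟨?_, mem_rev.mpr ⟨hu12, hpm.2⟩⟩
      intro he
      rw [he] at hpm
      exact absurd hpm.1 (not_lt.mpr hweq.le)
    have hsub2 : (rev u' w).card ≤ ((rev u u').erase p₀).card := by
      apply Finset.card_le_card_of_injOn Prod.swap
      · intro p hp
        have hpm := mem_rev.mp hp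
        have hu21 : u p.1 < u p.2 := by
          by_contra h2
          push_neg at h2
          have := hpm.2
          simp only [hw] at this
          nlinarith [hpm.1]
        rw [Finset.mem_coe, Finset.mem_erase]
        constructor
        · intro he
          rw [Prod.ext_iff] at he
          obtain ⟨h1, h2⟩ := he
          simp only [Prod.fst_swap, Prod.snd_swap] at h1 h2
          have := hpm.2
          rw [h2, h1] at this
          exact absurd this (not_lt.mpr hweq.le)
        · exact mem_rev.mpr ⟨by simpa using hu21, by simpa using hpm.1⟩
      · intro p _ q _ h
        exact Prod.swap_injective h
    have hposc : 0 < (rev u u').card := Finset.card_pos.mpr hne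
    have hcer : ((rev u u').erase p₀).card = (rev u u').card - 1 :=
      Finset.card_erase_of_mem hp₀
    set n' := (rev u u').card - 1 with hn'
    have hn'lt : n' < n := by omega
    have h1 := ih n' hn'lt u w (by rw [hrevuw]; simp)
    have h2 := ih n' hn'lt w u' (le_trans (Finset.card_le_card hsub1) (le_of_eq hcer))
    have h3 := ih n' hn'lt u' w (le_trans hsub2 (le_of_eq hcer))
    have key : ∑ j, ((1 - τ) * (u j * (φ (rnk w) j - φ (rnk u') j)))
        = (∑ j, w j * (φ (rnk w) j - φ (rnk u') j))
          + τ * (∑ j, u' j * (φ (rnk u') j - φ (rnk w) j)) := by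
      rw [Finset.mul_sum, ← Finset.sum_add_distrib]
      apply Finset.sum_congr rfl
      intro j _
      simp only [hw]
      ring
    have hterm2 : 0 ≤ ∑ j, u j * (φ (rnk w) j - φ (rnk u') j) := by
      have h4 : 0 ≤ (1 - τ) * ∑ j, u j * (φ (rnk w) j - φ (rnk u') j) := by
        rw [Finset.mul_sum, key]
        have := mul_nonneg hτpos.le h3
        linarith
      nlinarith
    have split : ∑ j, u j * (φ (rnk u) j - φ (rnk u') j)
        = (∑ j, u j * (φ (rnk u) j - φ (rnk w) j))
          + ∑ j, u j * (φ (rnk w) j - φ (rnk u') j) := by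
      rw [← Finset.sum_add_distrib]
      exact Finset.sum_congr rfl (fun j _ => by ring)
    rw [split]
    linarith

end MultiSepAux

/-- If a mechanism is multi-separation strategyproof (for every multi-separation
`(R,R')`, `φ(R)` dominates `φ(R')` at `R` and `φ(R')` dominates `φ(R)` at `R'`),
then it is strategyproof. -/
theorem multi_sep_sp_implies_sp {α : Type} [Fintype α]
    (φ : (α → ℕ) → α → ℝ) (hlot : ∀ R, IsLottery (φ R))
    (hmsp : ∀ R R', IsMultiSeparation R R' →
      SD R (φ R) (φ R') ∧ SD R' (φ R') (φ R)) :
    Strategyproof φ := by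
  intro R R' hR hR' a
  have key : ∀ ε : ℝ, 0 < ε →
      0 ≤ (∑ j ∈ univ.filter (fun j => R j ≤ R a), (φ R j - φ R' j))
          + ε * (∑ j, (-(R j : ℝ)) * (φ R j - φ R' j)) := by
    intro ε hε
    set u : α → ℝ := fun j => (if R j ≤ R a then (1:ℝ) else 0) + ε * (-(R j : ℝ)) with hu
    set u' : α → ℝ := fun j => -(R' j : ℝ) with hu'
    have hind : ∀ b c : α, R b ≤ R c →
        (if R c ≤ R a then (1:ℝ) else 0) ≤ (if R b ≤ R a then (1:ℝ) else 0) := by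
      intro b c hbc
      by_cases h1 : R c ≤ R a
      · rw [if_pos h1, if_pos (by omega)]
      · rw [if_neg h1]
        split <;> norm_num
    have hcons : ∀ b c : α, R b < R c ↔ u c < u b := by
      intro b c
      constructor
      · intro h
        have h2 := hind b c h.le
        have h3 : (R b : ℝ) < (R c : ℝ) := by exact_mod_cast h
        simp only [hu]
        nlinarith
      · intro h
        by_contra h2
        push_neg at h2
        have h3 := hind c b h2
        have h4 : (R c : ℝ) ≤ (R b : ℝ) := by exact_mod_cast h2
        simp only [hu] at h
        nlinarith
    have hcons' : ∀ b c : α, R' b < R' c ↔ u' c < u' b := by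
      intro b c
      simp only [hu', neg_lt_neg_iff, Nat.cast_lt]
    have hru : rnk u = R :=
      (canonical_ext hR (canonical_rnk u)
        (fun b c => (hcons b c).trans (rnk_lt_iff u b c).symm)).symm
    have hru' : rnk u' = R' :=
      (canonical_ext hR' (canonical_rnk u')
        (fun b c => (hcons' b c).trans (rnk_lt_iff u' b c).symm)).symm
    have hmain := main_ind φ hlot hmsp (rev u u').card u u' (le_refl _)
    rw [hru, hru'] at hmain
    have expand : ∑ j, u j * (φ R j - φ R' j)
        = (∑ j ∈ univ.filter (fun j => R j ≤ R a), (φ R j - φ R' j))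
          + ε * (∑ j, (-(R j : ℝ)) * (φ R j - φ R' j)) := by
      rw [Finset.sum_filter, Finset.mul_sum, ← Finset.sum_add_distrib]
      apply Finset.sum_congr rfl
      intro j _
      simp only [hu]
      split <;> ring
    rw [expand] at hmain
    exact hmain
  have hP : 0 ≤ ∑ j ∈ univ.filter (fun j => R j ≤ R a), (φ R j - φ R' j) := by
    set P := ∑ j ∈ univ.filter (fun j => R j ≤ R a), (φ R j - φ R' j) with hPd
    set M := ∑ j, (-(R j : ℝ)) * (φ R j - φ R' j) with hMd
    by_contra hneg
    push_neg at hneg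
    by_cases hM : M ≤ 0
    · have := key 1 one_pos
      linarith
    · push_neg at hM
      have hεpos : 0 < -P / (2 * M) := div_pos (by linarith) (by linarith)
      have := key (-P / (2 * M)) hεpos
      have hMne : M ≠ 0 := ne_of_gt hM
      have heq : -P / (2 * M) * M = -P / 2 := by
        field_simp
      rw [heq] at this
      linarith
  rw [ge_iff_le, ← sub_nonneg, ← Finset.sum_sub_distrib]
  exact hP
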